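/- Let I be a type and Γ = (γ_{ik}) a matrix indexed by I × I with nonnegative real entries. Suppose there exist vectors s, t : I → ℝ with s_i > 0 for all i, such that for every i the sum ∑_k γ_{ik} s_k is at most t_i, and for every k the sum ∑_i γ_{ik} t_i is at most s_k, with t_i > 0 for all i. Then for all ξ, ζ ∈ ℓ²(I), |∑_{i,k} γ_{ik} ξ_k conj(ζ_i)| ≤ ‖ξ‖ ‖ζ‖; i.e., Γ defines a bounded operator on ℓ²(I) of norm at most 1. -/

import Mathlib

open scoped ComplexConjugate ENNReal NNReal

private lemma sqrt_mul_sqrt_aux {x y z : ℝ} (hx : 0 ≤ x) (hy : 0 < y) (hz : 0 < z) :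
    Real.sqrt (x * y / z) * Real.sqrt (x * z / y) = x := by
  rw [← Real.sqrt_mul (by positivity)]
  have : x * y / z * (x * z / y) = x * x := by field_simp
  rw [this, Real.sqrt_mul_self hx]

/-- Schur-test lemma: a matrix with nonnegative entries admitting strictly positive
weight vectors `s`, `t` with `Γ s ≤ t` and `Γᵀ t ≤ s` defines a contraction on `ℓ²(I)`. -/
theorem stmt_0 {I : Type*} (γ : I → I → ℝ) (s t : I → ℝ)
    (hγ : ∀ i k, 0 ≤ γ i k)
    (hs : ∀ i, 0 < s i) (ht : ∀ i, 0 < t i)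
    (hrow : ∀ i, Summable fun k => γ i k * s k)
    (hrow' : ∀ i, (∑' k, γ i k * s k) ≤ t i)
    (hcol : ∀ k, Summable fun i => γ i k * t i)
    (hcol' : ∀ k, (∑' i, γ i k * t i) ≤ s k)
    (ξ ζ : lp (fun _ : I => ℂ) 2) :
    ‖∑' p : I × I, (γ p.1 p.2 : ℂ) * ξ p.2 * conj (ζ p.1)‖ ≤ ‖ξ‖ * ‖ζ‖ := by
  have htop : (0:ℝ) < (2 : ℝ≥0∞).toReal := by norm_num
  -- square-summability of ξ and ζ
  have hζ2 : Summable fun i => ‖ζ i‖ ^ (2:ℝ) := by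
    simpa using (lp.memℓp ζ).summable htop
  have hξ2 : Summable fun k => ‖ξ k‖ ^ (2:ℝ) := by
    simpa using (lp.memℓp ξ).summable htop
  -- the two auxiliary functions
  set A : I × I → ℝ := fun p => Real.sqrt (γ p.1 p.2 * s p.2 / t p.1) * ‖ζ p.1‖ with hA
  set B : I × I → ℝ := fun p => Real.sqrt (γ p.1 p.2 * t p.1 / s p.2) * ‖ξ p.2‖ with hB
  have hAnn : ∀ p, 0 ≤ A p := fun p => mul_nonneg (Real.sqrt_nonneg _) (norm_nonneg _)
  have hBnn : ∀ p, 0 ≤ B p := fun p => mul_nonneg (Real.sqrt_nonneg _) (norm_nonneg _)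
  have hAB : ∀ p : I × I, A p * B p = γ p.1 p.2 * (‖ξ p.2‖ * ‖ζ p.1‖) := by
    intro p
    have := sqrt_mul_sqrt_aux (hγ p.1 p.2) (hs p.2) (ht p.1)
    calc A p * B p
        = (Real.sqrt (γ p.1 p.2 * s p.2 / t p.1) * Real.sqrt (γ p.1 p.2 * t p.1 / s p.2)) *
            (‖ζ p.1‖ * ‖ξ p.2‖) := by ring
      _ = γ p.1 p.2 * (‖ξ p.2‖ * ‖ζ p.1‖) := by rw [this]; ring
  have hAsq : ∀ p : I × I, A p ^ (2:ℕ) = γ p.1 p.2 * s p.2 / t p.1 * ‖ζ p.1‖ ^ 2 := by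
    intro p
    rw [hA, mul_pow, Real.sq_sqrt (div_nonneg (mul_nonneg (hγ _ _) (hs _).le) (ht _).le)]
  have hBsq : ∀ p : I × I, B p ^ (2:ℕ) = γ p.1 p.2 * t p.1 / s p.2 * ‖ξ p.2‖ ^ 2 := by
    intro p
    rw [hB, mul_pow, Real.sq_sqrt (div_nonneg (mul_nonneg (hγ _ _) (ht _).le) (hs _).le)]
  -- summability of A^2 with sum bounded by ‖ζ‖^2
  have hnnA : ∀ p : I × I, 0 ≤ γ p.1 p.2 * s p.2 / t p.1 * ‖ζ p.1‖ ^ 2 := fun p =>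
    mul_nonneg (div_nonneg (mul_nonneg (hγ _ _) (hs _).le) (ht _).le) (sq_nonneg _)
  have hnnB : ∀ p : I × I, 0 ≤ γ p.1 p.2 * t p.1 / s p.2 * ‖ξ p.2‖ ^ 2 := fun p =>
    mul_nonneg (div_nonneg (mul_nonneg (hγ _ _) (ht _).le) (hs _).le) (sq_nonneg _)
  have hArow : ∀ i, Summable fun k => γ i k * s k / t i * ‖ζ i‖ ^ 2 := by
    intro i
    simpa [div_eq_mul_inv, mul_assoc] using (hrow i).mul_right ((t i)⁻¹ * ‖ζ i‖ ^ 2)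
  have hArowsum : ∀ i, (∑' k, γ i k * s k / t i * ‖ζ i‖ ^ 2) ≤ ‖ζ i‖ ^ 2 := by
    intro i
    have : (∑' k, γ i k * s k / t i * ‖ζ i‖ ^ 2)
        = (∑' k, γ i k * s k) * ((t i)⁻¹ * ‖ζ i‖ ^ 2) := by
      rw [← tsum_mul_right]
      exact tsum_congr fun k => by rw [div_eq_mul_inv]; ring
    rw [this]
    calc (∑' k, γ i k * s k) * ((t i)⁻¹ * ‖ζ i‖ ^ 2)
        ≤ t i * ((t i)⁻¹ * ‖ζ i‖ ^ 2) :=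
          mul_le_mul_of_nonneg_right (hrow' i)
            (mul_nonneg (inv_nonneg.mpr (ht i).le) (sq_nonneg _))
      _ = ‖ζ i‖ ^ 2 := by rw [← mul_assoc, mul_inv_cancel₀ (ht i).ne', one_mul]
  have hAsum : Summable fun p : I × I => A p ^ (2:ℕ) := by
    rw [summable_congr hAsq]
    rw [summable_prod_of_nonneg hnnA]
    refine ⟨fun i => hArow i, ?_⟩
    apply Summable.of_nonneg_of_le (fun i => tsum_nonneg fun k => hnnA (i, k))
      (fun i => hArowsum i)
    simpa [Real.rpow_natCast] using hζ2
  have hAval : (∑' p : I × I, A p ^ (2:ℕ)) ≤ ‖ζ‖ ^ (2:ℕ) := by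
    have h1 : (∑' p : I × I, A p ^ (2:ℕ)) = ∑' i, ∑' k, γ i k * s k / t i * ‖ζ i‖ ^ 2 := by
      rw [tsum_congr hAsq]
      exact Summable.tsum_prod ((summable_congr hAsq).mp hAsum)
    rw [h1]
    have h2 : (∑' i, ‖ζ i‖ ^ (2:ℕ)) = ‖ζ‖ ^ (2:ℕ) := by
      have := lp.norm_rpow_eq_tsum htop ζ
      simpa [Real.rpow_natCast] using this.symm
    rw [← h2]
    apply Summable.tsum_le_tsum hArowsum
    · exact ((summable_prod_of_nonneg hnnA).mp ((summable_congr hAsq).mp hAsum)).2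
    · simpa [Real.rpow_natCast] using hζ2
  -- summability of B^2 with sum bounded by ‖ξ‖^2 (swap the product)
  have hBrow : ∀ k, Summable fun i => γ i k * t i / s k * ‖ξ k‖ ^ 2 := by
    intro k
    simpa [div_eq_mul_inv, mul_assoc] using (hcol k).mul_right ((s k)⁻¹ * ‖ξ k‖ ^ 2)
  have hBrowsum : ∀ k, (∑' i, γ i k * t i / s k * ‖ξ k‖ ^ 2) ≤ ‖ξ k‖ ^ 2 := by
    intro k
    have : (∑' i, γ i k * t i / s k * ‖ξ k‖ ^ 2)
        = (∑' i, γ i k * t i) * ((s k)⁻¹ * ‖ξ k‖ ^ 2) := by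
      rw [← tsum_mul_right]
      exact tsum_congr fun i => by rw [div_eq_mul_inv]; ring
    rw [this]
    calc (∑' i, γ i k * t i) * ((s k)⁻¹ * ‖ξ k‖ ^ 2)
        ≤ s k * ((s k)⁻¹ * ‖ξ k‖ ^ 2) :=
          mul_le_mul_of_nonneg_right (hcol' k)
            (mul_nonneg (inv_nonneg.mpr (hs k).le) (sq_nonneg _))
      _ = ‖ξ k‖ ^ 2 := by rw [← mul_assoc, mul_inv_cancel₀ (hs k).ne', one_mul]
  have hBswap : Summable fun q : I × I => γ q.2 q.1 * t q.2 / s q.1 * ‖ξ q.1‖ ^ 2 := by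
    rw [summable_prod_of_nonneg (fun q => hnnB (q.2, q.1))]
    refine ⟨fun k => hBrow k, ?_⟩
    apply Summable.of_nonneg_of_le (fun k => tsum_nonneg fun i => hnnB (i, k))
      (fun k => hBrowsum k)
    simpa [Real.rpow_natCast] using hξ2
  have hBsum : Summable fun p : I × I => B p ^ (2:ℕ) := by
    rw [summable_congr hBsq]
    rw [← (Equiv.prodComm I I).summable_iff]
    exact hBswap
  have hBval : (∑' p : I × I, B p ^ (2:ℕ)) ≤ ‖ξ‖ ^ (2:ℕ) := by
    have h1 : (∑' p : I × I, B p ^ (2:ℕ))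
        = ∑' q : I × I, γ q.2 q.1 * t q.2 / s q.1 * ‖ξ q.1‖ ^ 2 := by
      rw [tsum_congr hBsq]
      exact ((Equiv.prodComm I I).tsum_eq _).symm
    rw [h1, Summable.tsum_prod hBswap]
    have h2 : (∑' k, ‖ξ k‖ ^ (2:ℕ)) = ‖ξ‖ ^ (2:ℕ) := by
      have := lp.norm_rpow_eq_tsum htop ξ
      simpa [Real.rpow_natCast] using this.symm
    rw [← h2]
    apply Summable.tsum_le_tsum hBrowsum
    · exact ((summable_prod_of_nonneg (fun q => hnnB (q.2, q.1))).mp hBswap).2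
    · simpa [Real.rpow_natCast] using hξ2
  -- build lp elements on I × I
  have hAmem : Memℓp A 2 := by
    apply memℓp_gen
    have : ∀ p : I × I, ‖A p‖ ^ (2 : ℝ≥0∞).toReal = A p ^ (2:ℕ) := by
      intro p
      rw [Real.norm_of_nonneg (hAnn p)]
      rw [show (2 : ℝ≥0∞).toReal = ((2:ℕ):ℝ) by norm_num, Real.rpow_natCast]
    rw [summable_congr this]
    exact hAsum
  have hBmem : Memℓp B 2 := by
    apply memℓp_gen
    have : ∀ p : I × I, ‖B p‖ ^ (2 : ℝ≥0∞).toReal = B p ^ (2:ℕ) := by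
      intro p
      rw [Real.norm_of_nonneg (hBnn p)]
      rw [show (2 : ℝ≥0∞).toReal = ((2:ℕ):ℝ) by norm_num, Real.rpow_natCast]
    rw [summable_congr this]
    exact hBsum
  set Alp : lp (fun _ : I × I => ℝ) 2 := ⟨A, hAmem⟩ with hAlp
  set Blp : lp (fun _ : I × I => ℝ) 2 := ⟨B, hBmem⟩ with hBlp
  have hpq : (2 : ℝ≥0∞).toReal.HolderConjugate (2 : ℝ≥0∞).toReal := by
    constructor <;> norm_num
  obtain ⟨hsum, hbound⟩ := lp.tsum_mul_le_mul_norm hpq Alp Blp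
  -- norms of Alp and Blp
  have hAnorm : ‖Alp‖ ≤ ‖ζ‖ := by
    rw [← Real.rpow_le_rpow_iff (lp.norm_nonneg' Alp) (norm_nonneg ζ) htop]
    rw [lp.norm_rpow_eq_tsum htop Alp]
    have : ∀ p : I × I, ‖Alp p‖ ^ (2 : ℝ≥0∞).toReal = A p ^ (2:ℕ) := by
      intro p
      rw [show Alp p = A p from rfl, Real.norm_of_nonneg (hAnn p)]
      rw [show (2 : ℝ≥0∞).toReal = ((2:ℕ):ℝ) by norm_num, Real.rpow_natCast]
    rw [tsum_congr this]
    refine hAval.trans_eq ?_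
    rw [show (2 : ℝ≥0∞).toReal = ((2:ℕ):ℝ) by norm_num, Real.rpow_natCast]
  have hBnorm : ‖Blp‖ ≤ ‖ξ‖ := by
    rw [← Real.rpow_le_rpow_iff (lp.norm_nonneg' Blp) (norm_nonneg ξ) htop]
    rw [lp.norm_rpow_eq_tsum htop Blp]
    have : ∀ p : I × I, ‖Blp p‖ ^ (2 : ℝ≥0∞).toReal = B p ^ (2:ℕ) := by
      intro p
      rw [show Blp p = B p from rfl, Real.norm_of_nonneg (hBnn p)]
      rw [show (2 : ℝ≥0∞).toReal = ((2:ℕ):ℝ) by norm_num, Real.rpow_natCast]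
    rw [tsum_congr this]
    refine hBval.trans_eq ?_
    rw [show (2 : ℝ≥0∞).toReal = ((2:ℕ):ℝ) by norm_num, Real.rpow_natCast]
  -- norms of summands
  have hFnorm : ∀ p : I × I, ‖(γ p.1 p.2 : ℂ) * ξ p.2 * conj (ζ p.1)‖ = ‖Alp p‖ * ‖Blp p‖ := by
    intro p
    rw [show Alp p = A p from rfl, show Blp p = B p from rfl,
      Real.norm_of_nonneg (hAnn p), Real.norm_of_nonneg (hBnn p), hAB p]
    rw [norm_mul, norm_mul, RCLike.norm_conj]
    rw [Complex.norm_real, Real.norm_of_nonneg (hγ p.1 p.2)]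
    ring
  have hFsummable : Summable fun p : I × I => (γ p.1 p.2 : ℂ) * ξ p.2 * conj (ζ p.1) := by
    apply Summable.of_norm
    rw [summable_congr hFnorm]
    exact hsum
  calc ‖∑' p : I × I, (γ p.1 p.2 : ℂ) * ξ p.2 * conj (ζ p.1)‖
      ≤ ∑' p : I × I, ‖(γ p.1 p.2 : ℂ) * ξ p.2 * conj (ζ p.1)‖ :=
        norm_tsum_le_tsum_norm (by rw [summable_congr hFnorm]; exact hsum)
    _ = ∑' p : I × I, ‖Alp p‖ * ‖Blp p‖ := tsum_congr hFnorm
    _ ≤ ‖Alp‖ * ‖Blp‖ := hbound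
    _ ≤ ‖ξ‖ * ‖ζ‖ := by
        rw [mul_comm]
        exact mul_le_mul hBnorm hAnorm (lp.norm_nonneg' Alp) (norm_nonneg ξ)
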